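/- Let n ≥ 2, let u : ℝ^n → ℝ be a twice continuously differentiable function with u ∈ L²(ℝ^n) (that is, u² is Lebesgue integrable), let Ψ : ℝ^n → ℝ be a measurable function with 0 ≤ Ψ(x) ≤ K for all x and some constant K, and let λ < 0. Assume that −Δu(x) + Ψ(x)u(x) = λ u(x) for every x ∈ ℝ^n. Then u is identically zero. -/

import Mathlib

open MeasureTheory

/-- The Euclidean Laplacian of `u : ℝⁿ → ℝ`, i.e. the trace of the second derivative:
the sum of the pure second directional derivatives along the standard basis directions. -/
noncomputable def euclideanLaplacian {n : ℕ} (u : EuclideanSpace ℝ (Fin n) → ℝ)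
    (x : EuclideanSpace ℝ (Fin n)) : ℝ :=
  ∑ i : Fin n, iteratedFDeriv ℝ 2 u x ![EuclideanSpace.single i 1, EuclideanSpace.single i 1]

open Metric Set Function


/-- A 1D cutoff: `χ = 1` on `(-∞,1]`, `0` on `[4,∞)`, with globally bounded derivative
vanishing on `(4,∞)`. -/
lemma exists_cutoff : ∃ χ : ℝ → ℝ, ContDiff ℝ 1 χ ∧ (∀ s, s ≤ 1 → χ s = 1) ∧
    (∀ s, 4 ≤ s → χ s = 0) ∧
    ∃ C : ℝ, 0 ≤ C ∧ (∀ s, |deriv χ s| ≤ C) ∧ (∀ s, 4 < s → deriv χ s = 0) := by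
  set P : ℝ → ℝ := Real.smoothTransition with hP
  have hPc : ContDiff ℝ 1 P := Real.smoothTransition.contDiff
  -- derivative of P is zero off [0,1]
  have hP'zero : ∀ t : ℝ, t < 0 ∨ 1 < t → deriv P t = 0 := by
    rintro t (ht | ht)
    · have : P =ᶠ[nhds t] fun _ => (0 : ℝ) := by
        filter_upwards [Iio_mem_nhds ht] with s hs
        exact Real.smoothTransition.zero_of_nonpos hs.le
      rw [this.deriv_eq, deriv_const]
    · have : P =ᶠ[nhds t] fun _ => (1 : ℝ) := by
        filter_upwards [Ioi_mem_nhds ht] with s hs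
        exact Real.smoothTransition.one_of_one_le hs.le
      rw [this.deriv_eq, deriv_const]
  have hP'supp : HasCompactSupport (deriv P) := by
    apply HasCompactSupport.intro (isCompact_Icc (a := (0:ℝ)) (b := 1))
    intro t ht
    simp only [Set.mem_Icc, not_and_or, not_le] at ht
    exact hP'zero t (by tauto)
  have hP'cont : Continuous (deriv P) :=
    (Real.smoothTransition.contDiff (n := 1)).continuous_deriv le_rfl
  obtain ⟨C0, hC0⟩ := hP'cont.bounded_above_of_compact_support hP'supp
  have hC0nn : 0 ≤ C0 := le_trans (norm_nonneg _) (hC0 0)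
  set χ : ℝ → ℝ := fun s => 1 - P ((s - 1) / 3) with hχ
  have hlin : ContDiff ℝ 1 fun s : ℝ => (s - 1) / 3 :=
    (contDiff_id.sub contDiff_const).div_const 3
  have hχd : ∀ s : ℝ, HasDerivAt χ (-(deriv P ((s - 1) / 3) * (1 / 3))) s := by
    intro s
    have h1 : HasDerivAt (fun s : ℝ => (s - 1) / 3) (1 / 3) s := by
      simpa using ((hasDerivAt_id s).sub_const 1).div_const 3
    have h2 : HasDerivAt P (deriv P ((s - 1) / 3)) ((s - 1) / 3) :=
      ((hPc.differentiable one_ne_zero) _).hasDerivAt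
    exact ((hasDerivAt_const s (1:ℝ)).sub ((h2.comp s h1))).congr_deriv (zero_sub _)
  refine ⟨χ, ?_, ?_, ?_, C0 / 3 + |deriv χ 0|, ?_, ?_, ?_⟩
  · exact contDiff_const.sub (hPc.comp hlin)
  · intro s hs
    have : P ((s - 1) / 3) = 0 :=
      Real.smoothTransition.zero_of_nonpos (by linarith)
    simp [hχ, this]
  · intro s hs
    have : P ((s - 1) / 3) = 1 :=
      Real.smoothTransition.one_of_one_le (by linarith)
    simp [hχ, this]
  · have := abs_nonneg (deriv χ 0); linarith
  · intro s
    rw [(hχd s).deriv]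
    have := hC0 ((s - 1) / 3)
    rw [Real.norm_eq_abs] at this
    calc |(-(deriv P ((s - 1) / 3) * (1 / 3)))| = |deriv P ((s - 1) / 3)| / 3 := by
          rw [abs_neg, abs_mul]; simp [abs_of_nonneg]; ring
      _ ≤ C0 / 3 := by linarith
      _ ≤ C0 / 3 + |deriv χ 0| := by have := abs_nonneg (deriv χ 0); linarith
  · intro s hs
    rw [(hχd s).deriv, hP'zero _ (Or.inr (by linarith)), zero_mul, neg_zero]


/-- Continuity of a directional derivative of a `C¹` function. -/
lemma cont_fderiv_apply {E : Type*} [NormedAddCommGroup E] [NormedSpace ℝ E]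
    (g : E → ℝ) (hg : ContDiff ℝ 1 g) (v : E) :
    Continuous fun x => fderiv ℝ g x v :=
  (hg.continuous_fderiv one_ne_zero).clm_apply continuous_const

lemma hcs_fderiv_apply {E : Type*} [NormedAddCommGroup E] [NormedSpace ℝ E]
    (g : E → ℝ) (hgs : HasCompactSupport g) (v : E) :
    HasCompactSupport fun x => fderiv ℝ g x v :=
  hgs.fderiv_apply ℝ v

/-- Integral of a coordinate partial derivative of a compactly supported `C¹` function
on Euclidean space vanishes. -/
lemma integral_fderiv_single {m : ℕ} (i : Fin (m + 1))
    (g : EuclideanSpace ℝ (Fin (m + 1)) → ℝ) (hg : ContDiff ℝ 1 g)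
    (hgs : HasCompactSupport g) :
    ∫ x, fderiv ℝ g x (EuclideanSpace.single i 1) = 0 := by
  set v : EuclideanSpace ℝ (Fin (m + 1)) := EuclideanSpace.single i 1 with hv
  set F : EuclideanSpace ℝ (Fin (m + 1)) → ℝ := fun x => fderiv ℝ g x v with hF
  have hFc : Continuous F := cont_fderiv_apply g hg v
  have hFs : HasCompactSupport F := hcs_fderiv_apply g hgs v
  have hFint : Integrable F := hFc.integrable_of_hasCompactSupport hFs
  -- transfer to the pi type
  set eE := (MeasurableEquiv.toLp 2 (Fin (m + 1) → ℝ)).symm with heE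
  have hmp1 : MeasurePreserving (⇑eE.symm) volume volume :=
    (EuclideanSpace.volume_preserving_symm_measurableEquiv_toLp (Fin (m + 1))).symm
  have h1 : ∫ x, F x = ∫ y : Fin (m + 1) → ℝ, F (eE.symm y) :=
    (hmp1.integral_comp eE.symm.measurableEmbedding F).symm
  set e2 := (MeasurableEquiv.piFinSuccAbove (fun _ : Fin (m + 1) => ℝ) i).symm with he2
  have hmp2 : MeasurePreserving (⇑e2) volume volume :=
    (volume_preserving_piFinSuccAbove (fun _ : Fin (m + 1) => ℝ) i).symm
  have h2 : ∫ y : Fin (m + 1) → ℝ, F (eE.symm y)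
      = ∫ p : ℝ × (Fin m → ℝ), F (eE.symm (e2 p)) :=
    (hmp2.integral_comp e2.measurableEmbedding fun y => F (eE.symm y)).symm
  have he2app : ∀ p : ℝ × (Fin m → ℝ), e2 p = i.insertNth p.1 p.2 := fun p => rfl
  -- the integrand as a function on the product
  set G : ℝ × (Fin m → ℝ) → ℝ := fun p => F (eE.symm (i.insertNth p.1 p.2)) with hG
  have hGint : Integrable G (volume.prod volume) := by
    have : Integrable (fun y : Fin (m + 1) → ℝ => F (eE.symm y)) volume :=
      (hmp1.integrable_comp_emb eE.symm.measurableEmbedding).2 hFint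
    have h := (hmp2.integrable_comp_emb e2.measurableEmbedding).2 this
    rw [Measure.volume_eq_prod] at h; exact h
  have h3 : ∫ p : ℝ × (Fin m → ℝ), F (eE.symm (e2 p)) = ∫ y : Fin m → ℝ, ∫ t : ℝ, G (t, y) := by
    rw [show (fun p : ℝ × (Fin m → ℝ) => F (eE.symm (e2 p))) = G from rfl]
    rw [Measure.volume_eq_prod, integral_prod _ hGint]
    exact integral_integral_swap (by exact hGint)
  -- inner integral vanishes by the 1D FTC
  have hinner : ∀ y : Fin m → ℝ, (∫ t : ℝ, G (t, y)) = 0 := by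
    intro y
    set A : ℝ → EuclideanSpace ℝ (Fin (m + 1)) := fun t => eE.symm (i.insertNth t y) with hA
    have hAaff : ∀ t : ℝ, A t = A 0 + t • v := by
      intro t
      ext j
      have hcoord : ∀ (z : Fin (m + 1) → ℝ) (j), (eE.symm z) j = z j := fun _ _ => rfl
      rw [PiLp.add_apply, PiLp.smul_apply, smul_eq_mul]
      simp only [hA, hcoord]
      by_cases hj : j = i
      · subst hj
        simp [hv, EuclideanSpace.single_apply]
      · obtain ⟨k, rfl⟩ := Fin.exists_succAbove_eq hj
        simp [hv, EuclideanSpace.single_apply, Fin.succAbove_ne i k]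
    have hAfun : A = fun t => A 0 + t • v := funext hAaff
    have hAc : ContDiff ℝ 1 A := by
      rw [hAfun]; exact contDiff_const.add (contDiff_id.smul contDiff_const)
    have hAd : ∀ t : ℝ, HasDerivAt A v t := by
      intro t
      rw [hAfun]
      simpa using ((hasDerivAt_id t).smul_const v).const_add (A 0)
    set w : ℝ → ℝ := fun t => g (A t) with hw
    have hwd : ∀ t : ℝ, HasDerivAt w (F (A t)) t := by
      intro t
      have hgd : HasFDerivAt g (fderiv ℝ g (A t)) (A t) :=
        (hg.differentiable one_ne_zero (A t)).hasFDerivAt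
      exact hgd.comp_hasDerivAt t (hAd t)
    have hwc : ContDiff ℝ 1 w := hg.comp hAc
    have hAemb : Topology.IsClosedEmbedding A := by
      have hco : ∀ (z : Fin (m + 1) → ℝ) (j), (eE.symm z) j = z j := fun _ _ => rfl
      have hBA : Function.LeftInverse (fun x : EuclideanSpace ℝ (Fin (m + 1)) => x i) A := by
        intro t
        show (eE.symm (i.insertNth t y)) i = t
        rw [hco]
        simp
      exact hBA.isClosedEmbedding (EuclideanSpace.proj (𝕜 := ℝ) i).continuous hAc.continuous
    have hwsupp : HasCompactSupport w := hgs.comp_isClosedEmbedding hAemb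
    have hFA_cont : Continuous fun t => F (A t) := hFc.comp hAc.continuous
    have hFA_supp : HasCompactSupport fun t => F (A t) := hFs.comp_isClosedEmbedding hAemb
    have hFA_int : Integrable fun t => F (A t) :=
      hFA_cont.integrable_of_hasCompactSupport hFA_supp
    have hderiv_eq : deriv w = fun t => F (A t) := funext fun t => (hwd t).deriv
    have hIic := HasCompactSupport.integral_Iic_deriv_eq hwc hwsupp 0
    have hIoi := HasCompactSupport.integral_Ioi_deriv_eq hwc hwsupp 0
    rw [hderiv_eq] at hIic hIoi
    calc (∫ t : ℝ, G (t, y)) = ∫ t : ℝ, F (A t) := rfl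
      _ = (∫ t in Iic (0:ℝ), F (A t)) + ∫ t in Ioi (0:ℝ), F (A t) :=
          (intervalIntegral.integral_Iic_add_Ioi hFA_int.integrableOn hFA_int.integrableOn).symm
      _ = 0 := by rw [hIic, hIoi]; ring
  rw [h1, h2, h3]
  simp [hinner]
lemma caccioppoli {m : ℕ} (u φ V : EuclideanSpace ℝ (Fin (m + 1)) → ℝ)
    (hu : ContDiff ℝ 2 u) (huL2 : Integrable (fun x => (u x) ^ 2))
    (hV : ∀ x, euclideanLaplacian u x = V x * u x)
    (c : ℝ) (hc : ∀ x, c * (u x) ^ 2 ≤ V x * (u x) ^ 2)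
    (hφ : ContDiff ℝ 1 φ) (hφs : HasCompactSupport φ)
    (M : ℝ)
    (hM : ∀ x, ∑ i : Fin (m + 1), (fderiv ℝ φ x (EuclideanSpace.single i 1)) ^ 2 ≤ M) :
    c * ∫ x, (φ x) ^ 2 * (u x) ^ 2 ≤ M * ∫ x, (u x) ^ 2 := by
  set v : Fin (m + 1) → EuclideanSpace ℝ (Fin (m + 1)) :=
    fun i => EuclideanSpace.single i 1 with hv
  set g : Fin (m + 1) → EuclideanSpace ℝ (Fin (m + 1)) → ℝ :=
    fun i x => φ x ^ 2 * u x * fderiv ℝ u x (v i) with hg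
  have hu1 : ContDiff ℝ 1 u := hu.of_le one_le_two
  have hufd : ContDiff ℝ 1 (fderiv ℝ u) := hu.fderiv_right (le_refl 2)
  have hpC : ∀ i, ContDiff ℝ 1 (fun x => fderiv ℝ u x (v i)) :=
    fun i => hufd.clm_apply contDiff_const
  have hgC : ∀ i, ContDiff ℝ 1 (g i) := fun i => ((hφ.pow 2).mul hu1).mul (hpC i)
  have hgsupp : ∀ i, HasCompactSupport (g i) := fun i =>
    HasCompactSupport.intro hφs (fun x hx => by
      simp [hg, image_eq_zero_of_notMem_tsupport hx])
  -- pointwise formula for the divergence term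
  have hSx : ∀ x, (∑ i, fderiv ℝ (g i) x (v i)) =
      φ x ^ 2 * u x * euclideanLaplacian u x
        + ∑ i, (φ x ^ 2 * (fderiv ℝ u x (v i)) ^ 2
            + 2 * φ x * u x * (fderiv ℝ u x (v i)) * (fderiv ℝ φ x (v i))) := by
    intro x
    have hlap : euclideanLaplacian u x = ∑ i, fderiv ℝ (fderiv ℝ u) x (v i) (v i) := by
      simp [euclideanLaplacian, iteratedFDeriv_two_apply, hv]
    have hterm : ∀ i, fderiv ℝ (g i) x (v i) =
        φ x ^ 2 * u x * (fderiv ℝ (fderiv ℝ u) x (v i) (v i))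
          + (φ x ^ 2 * (fderiv ℝ u x (v i)) ^ 2
            + 2 * φ x * u x * (fderiv ℝ u x (v i)) * (fderiv ℝ φ x (v i))) := by
      intro i
      have hφx : HasFDerivAt φ (fderiv ℝ φ x) x := (hφ.differentiable one_ne_zero x).hasFDerivAt
      have hux : HasFDerivAt u (fderiv ℝ u x) x := (hu1.differentiable one_ne_zero x).hasFDerivAt
      have hDux : HasFDerivAt (fderiv ℝ u) (fderiv ℝ (fderiv ℝ u) x) x :=
        (hufd.differentiable one_ne_zero x).hasFDerivAt
      have hpx : HasFDerivAt (fun y => fderiv ℝ u y (v i))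
          ((fderiv ℝ u x).comp (0 : EuclideanSpace ℝ (Fin (m + 1)) →L[ℝ]
              EuclideanSpace ℝ (Fin (m + 1)))
            + (fderiv ℝ (fderiv ℝ u) x).flip (v i)) x :=
        hDux.clm_apply (hasFDerivAt_const (v i) x)
      have hφ2x : HasFDerivAt (fun y => φ y ^ 2)
          (((2 : ℝ) * φ x) • fderiv ℝ φ x) x := by
        simpa [← pow_two, two_mul, add_smul] using hφx.fun_mul hφx
      have hax : HasFDerivAt (fun y => φ y ^ 2 * u y)
          ((φ x ^ 2) • fderiv ℝ u x + (u x) • (((2 : ℝ) * φ x) • fderiv ℝ φ x)) x :=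
        hφ2x.mul hux
      have hgx := hax.fun_mul hpx
      have hgi := hgx.fderiv
      rw [show fderiv ℝ (g i) = fderiv ℝ (fun y => (φ y ^ 2 * u y) * fderiv ℝ u y (v i))
          from rfl, hgi]
      simp only [ContinuousLinearMap.add_apply, ContinuousLinearMap.smul_apply,
        ContinuousLinearMap.coe_comp', comp_apply, ContinuousLinearMap.zero_apply,
        ContinuousLinearMap.flip_apply, smul_eq_mul, map_zero]
      ring
    rw [Finset.sum_congr rfl (fun i _ => hterm i), Finset.sum_add_distrib, hlap,
      Finset.mul_sum]
  -- integrability of each divergence term, and its integral vanishes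
  have hFi_cont : ∀ i, Continuous fun x => fderiv ℝ (g i) x (v i) :=
    fun i => cont_fderiv_apply (g i) (hgC i) (v i)
  have hFi_supp : ∀ i, HasCompactSupport fun x => fderiv ℝ (g i) x (v i) :=
    fun i => (hgsupp i).fderiv_apply ℝ (v i)
  have hFi_int : ∀ i, Integrable fun x => fderiv ℝ (g i) x (v i) :=
    fun i => (hFi_cont i).integrable_of_hasCompactSupport (hFi_supp i)
  have hSint : Integrable fun x => ∑ i, fderiv ℝ (g i) x (v i) :=
    integrable_finset_sum _ fun i _ => hFi_int i
  have hSzero : (∫ x, ∑ i, fderiv ℝ (g i) x (v i)) = 0 := by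
    rw [integral_finset_sum _ fun i _ => hFi_int i]
    simp only [hv, fun i : Fin (m + 1) => integral_fderiv_single i (g i) (hgC i) (hgsupp i)]
    simp
  -- pointwise lower bound
  have hpt : ∀ x, c * ((φ x) ^ 2 * (u x) ^ 2) - M * (u x) ^ 2
      ≤ ∑ i, fderiv ℝ (g i) x (v i) := by
    intro x
    rw [hSx x]
    have h2 : ∀ i : Fin (m + 1), φ x ^ 2 * (fderiv ℝ u x (v i)) ^ 2
        + 2 * φ x * u x * (fderiv ℝ u x (v i)) * (fderiv ℝ φ x (v i))
        = (φ x * fderiv ℝ u x (v i) + u x * fderiv ℝ φ x (v i)) ^ 2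
          - (u x) ^ 2 * (fderiv ℝ φ x (v i)) ^ 2 := fun i => by ring
    rw [Finset.sum_congr rfl fun i _ => h2 i, Finset.sum_sub_distrib, ← Finset.mul_sum]
    have hA : (0 : ℝ) ≤ ∑ i, (φ x * fderiv ℝ u x (v i) + u x * fderiv ℝ φ x (v i)) ^ 2 :=
      Finset.sum_nonneg fun i _ => sq_nonneg _
    have hB : (u x) ^ 2 * (∑ i, (fderiv ℝ φ x (v i)) ^ 2) ≤ (u x) ^ 2 * M :=
      mul_le_mul_of_nonneg_left (hM x) (sq_nonneg _)
    have hC : (φ x) ^ 2 * (c * (u x) ^ 2) ≤ (φ x) ^ 2 * (V x * (u x) ^ 2) :=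
      mul_le_mul_of_nonneg_left (hc x) (sq_nonneg _)
    have hVx : φ x ^ 2 * u x * euclideanLaplacian u x = φ x ^ 2 * (V x * (u x) ^ 2) := by
      rw [hV x]; ring
    rw [hVx]
    nlinarith [hA, hB, hC]
  -- integrate
  have hφ2u2_cont : Continuous fun x => (φ x) ^ 2 * (u x) ^ 2 :=
    ((hφ.continuous).pow 2).mul ((hu1.continuous).pow 2)
  have hφ2u2_supp : HasCompactSupport fun x => (φ x) ^ 2 * (u x) ^ 2 :=
    HasCompactSupport.intro hφs (fun x hx => by
      simp [image_eq_zero_of_notMem_tsupport hx])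
  have hφ2u2_int : Integrable fun x => (φ x) ^ 2 * (u x) ^ 2 :=
    hφ2u2_cont.integrable_of_hasCompactSupport hφ2u2_supp
  have hLint : Integrable fun x => c * ((φ x) ^ 2 * (u x) ^ 2) - M * (u x) ^ 2 :=
    (hφ2u2_int.const_mul c).sub (huL2.const_mul M)
  have hmono := integral_mono hLint hSint hpt
  rw [hSzero, integral_sub (hφ2u2_int.const_mul c) (huL2.const_mul M),
    integral_const_mul, integral_const_mul] at hmono
  linarith

set_option maxHeartbeats 1000000

theorem no_negative_L2_eigenvalue
    (n : ℕ) (hn : 2 ≤ n) (u : EuclideanSpace ℝ (Fin n) → ℝ) (hu : ContDiff ℝ 2 u)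
    (huL2 : Integrable (fun x => (u x) ^ 2))
    (Ψ : EuclideanSpace ℝ (Fin n) → ℝ) (hΨmeas : Measurable Ψ)
    (K : ℝ) (hΨ : ∀ x, 0 ≤ Ψ x ∧ Ψ x ≤ K)
    (lam : ℝ) (hlam : lam < 0)
    (heig : ∀ x, -euclideanLaplacian u x + Ψ x * u x = lam * u x) :
    ∀ x, u x = 0 := by
  obtain ⟨m, rfl⟩ : ∃ m, n = m + 1 := ⟨n - 1, by omega⟩
  obtain ⟨χ, hχC, hχ1, hχ0, C, hCnn, hCbd, hCz⟩ := exists_cutoff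
  set V : EuclideanSpace ℝ (Fin (m + 1)) → ℝ := fun x => Ψ x - lam with hVdef
  have hV : ∀ x, euclideanLaplacian u x = V x * u x := by
    intro x; have := heig x; simp only [hVdef]; linarith [heig x]
  have hc : ∀ x, (-lam) * (u x) ^ 2 ≤ V x * (u x) ^ 2 := by
    intro x
    have h1 := (hΨ x).1
    have h2 := sq_nonneg (u x)
    simp only [hVdef]
    nlinarith
  set I : ℝ := ∫ x, (u x) ^ 2 with hI
  have hInn : 0 ≤ I := integral_nonneg fun x => sq_nonneg _
  -- the key estimate, for every radius r ≥ some bound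
  have key : ∀ r : ℝ, 0 < r → ∀ R : ℝ, 0 < R → R ≤ r →
      ∫ x in ball (0 : EuclideanSpace ℝ (Fin (m + 1))) R, (u x) ^ 2
        ≤ (16 * C ^ 2 * I / (-lam)) / r ^ 2 := by
    intro r hr R hR hRr
    set φ : EuclideanSpace ℝ (Fin (m + 1)) → ℝ :=
      fun x => χ ((r ^ 2)⁻¹ * ‖x‖ ^ 2) with hφdef
    have hnsqC : ContDiff ℝ 1 fun x : EuclideanSpace ℝ (Fin (m + 1)) =>
        (r ^ 2)⁻¹ * ‖x‖ ^ 2 := contDiff_const.mul (contDiff_norm_sq (𝕜 := ℝ))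
    have hφC : ContDiff ℝ 1 φ := hχC.comp hnsqC
    have hφs : HasCompactSupport φ := by
      apply HasCompactSupport.intro (isCompact_closedBall
        (0 : EuclideanSpace ℝ (Fin (m + 1))) (2 * r))
      intro x hx
      simp only [mem_closedBall, dist_zero_right, not_le] at hx
      have h4 : 4 ≤ (r ^ 2)⁻¹ * ‖x‖ ^ 2 := by
        rw [le_inv_mul_iff₀ (by positivity)]
        nlinarith
      exact hχ0 _ h4
    -- derivative of φ
    have hφD : ∀ x, HasFDerivAt φ
        ((deriv χ ((r ^ 2)⁻¹ * ‖x‖ ^ 2)) •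
          ((r ^ 2)⁻¹ • ((2 : ℕ) • innerSL ℝ x))) x := by
      intro x
      have h1 : HasFDerivAt (fun y : EuclideanSpace ℝ (Fin (m + 1)) => ‖y‖ ^ 2)
          ((2 : ℕ) • innerSL ℝ x) x := by
        simpa using (hasFDerivAt_id x).norm_sq
      have h2 := h1.const_mul ((r ^ 2)⁻¹)
      have h3 : HasDerivAt χ (deriv χ ((r ^ 2)⁻¹ * ‖x‖ ^ 2)) ((r ^ 2)⁻¹ * ‖x‖ ^ 2) :=
        ((hχC.differentiable one_ne_zero) _).hasDerivAt
      exact h3.comp_hasFDerivAt x h2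
    have hnormsum : ∀ x : EuclideanSpace ℝ (Fin (m + 1)),
        ∑ i, (x i) ^ 2 = ‖x‖ ^ 2 := by
      intro x
      rw [EuclideanSpace.norm_eq, Real.sq_sqrt (by positivity)]
      congr 1; funext i; rw [Real.norm_eq_abs, sq_abs]
    have hφq : ∀ x i, fderiv ℝ φ x (EuclideanSpace.single i 1)
        = deriv χ ((r ^ 2)⁻¹ * ‖x‖ ^ 2) * ((r ^ 2)⁻¹ * (2 * x i)) := by
      intro x i
      rw [(hφD x).fderiv]
      simp only [ContinuousLinearMap.smul_apply, smul_eq_mul, nsmul_eq_mul,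
        Nat.cast_ofNat, innerSL_apply_apply]
      have : (inner ℝ x (EuclideanSpace.single i (1:ℝ)) : ℝ) = x i := by
        rw [EuclideanSpace.inner_single_right]; simp
      rw [this]
    have hM : ∀ x, ∑ i : Fin (m + 1), (fderiv ℝ φ x (EuclideanSpace.single i 1)) ^ 2
        ≤ 16 * C ^ 2 / r ^ 2 := by
      intro x
      have hsum : ∑ i : Fin (m + 1), (fderiv ℝ φ x (EuclideanSpace.single i 1)) ^ 2
          = (deriv χ ((r ^ 2)⁻¹ * ‖x‖ ^ 2)) ^ 2 * ((r ^ 2)⁻¹) ^ 2 * 4 * ‖x‖ ^ 2 := by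
        have hsum' : ∑ i : Fin (m + 1), (fderiv ℝ φ x (EuclideanSpace.single i 1)) ^ 2
            = (deriv χ ((r ^ 2)⁻¹ * ‖x‖ ^ 2)) ^ 2 * ((r ^ 2)⁻¹) ^ 2 * 4
              * (∑ i : Fin (m + 1), (x i) ^ 2) := by
          rw [Finset.mul_sum]
          apply Finset.sum_congr rfl
          intro i _
          rw [hφq x i]
          ring
        rw [hsum', hnormsum x]
      rcases le_or_gt ((r ^ 2)⁻¹ * ‖x‖ ^ 2) 4 with h4 | h4
      · have hx2 : ‖x‖ ^ 2 ≤ 4 * r ^ 2 := by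
          rw [inv_mul_le_iff₀ (by positivity)] at h4
          linarith
        have hd2 : (deriv χ ((r ^ 2)⁻¹ * ‖x‖ ^ 2)) ^ 2 ≤ C ^ 2 := by
          have h := hCbd ((r ^ 2)⁻¹ * ‖x‖ ^ 2)
          nlinarith [abs_nonneg (deriv χ ((r ^ 2)⁻¹ * ‖x‖ ^ 2)),
            sq_abs (deriv χ ((r ^ 2)⁻¹ * ‖x‖ ^ 2))]
        rw [hsum]
        calc (deriv χ ((r ^ 2)⁻¹ * ‖x‖ ^ 2)) ^ 2 * ((r ^ 2)⁻¹) ^ 2 * 4 * ‖x‖ ^ 2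
            ≤ C ^ 2 * ((r ^ 2)⁻¹) ^ 2 * 4 * (4 * r ^ 2) := by
              nlinarith [mul_le_mul hd2 hx2 (sq_nonneg ‖x‖) (sq_nonneg C),
                sq_nonneg ((r ^ 2)⁻¹)]
          _ = 16 * C ^ 2 / r ^ 2 := by
              field_simp
              ring
      · rw [hsum, hCz _ h4]
        have h0 : (0 : ℝ) ^ 2 * ((r ^ 2)⁻¹) ^ 2 * 4 * ‖x‖ ^ 2 = 0 := by ring
        rw [h0]
        positivity
    have hcac := caccioppoli u φ V hu huL2 hV (-lam) hc hφC hφs (16 * C ^ 2 / r ^ 2) hM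
    have hφone : ∀ x ∈ ball (0 : EuclideanSpace ℝ (Fin (m + 1))) R, φ x = 1 := by
      intro x hx
      simp only [mem_ball, dist_zero_right] at hx
      apply hχ1
      rw [inv_mul_le_iff₀ (by positivity)]
      nlinarith [norm_nonneg x]
    have hφ2u2_int : Integrable fun x => (φ x) ^ 2 * (u x) ^ 2 :=
      (((hφC.continuous).pow 2).mul (((hu.continuous)).pow 2)).integrable_of_hasCompactSupport
        (HasCompactSupport.intro hφs fun x hx => by
          simp [image_eq_zero_of_notMem_tsupport hx])
    have h1 : ∫ x in ball (0 : EuclideanSpace ℝ (Fin (m + 1))) R, (u x) ^ 2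
        = ∫ x in ball (0 : EuclideanSpace ℝ (Fin (m + 1))) R, (φ x) ^ 2 * (u x) ^ 2 :=
      setIntegral_congr_fun measurableSet_ball (fun x hx => by rw [hφone x hx]; ring)
    have h2 : ∫ x in ball (0 : EuclideanSpace ℝ (Fin (m + 1))) R, (φ x) ^ 2 * (u x) ^ 2
        ≤ ∫ x, (φ x) ^ 2 * (u x) ^ 2 :=
      setIntegral_le_integral hφ2u2_int (Filter.Eventually.of_forall fun x => by positivity)
    have hlam' : (0 : ℝ) < -lam := by linarith
    calc ∫ x in ball (0 : EuclideanSpace ℝ (Fin (m + 1))) R, (u x) ^ 2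
        = ∫ x in ball (0 : EuclideanSpace ℝ (Fin (m + 1))) R, (φ x) ^ 2 * (u x) ^ 2 := h1
      _ ≤ ∫ x, (φ x) ^ 2 * (u x) ^ 2 := h2
      _ ≤ 16 * C ^ 2 / r ^ 2 * I / (-lam) := by
          rw [le_div_iff₀ hlam']
          linarith [hcac]
      _ = (16 * C ^ 2 * I / (-lam)) / r ^ 2 := by ring
  -- conclusion
  intro x₀
  by_contra hne
  have hu0 : 0 < |u x₀| := abs_pos.mpr hne
  obtain ⟨δ, hδpos, hδ⟩ := Metric.continuousAt_iff.mp (hu.continuous.continuousAt)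
    (|u x₀| / 2) (by positivity)
  have hRpos : 0 < ‖x₀‖ + δ := by positivity
  have hsub : ball x₀ δ ⊆ ball (0 : EuclideanSpace ℝ (Fin (m + 1))) (‖x₀‖ + δ) := by
    intro y hy
    simp only [mem_ball, dist_zero_right] at *
    have h0 : ‖y‖ ≤ ‖y - x₀‖ + ‖x₀‖ := by
      simpa using norm_add_le (y - x₀) x₀
    rw [dist_eq_norm] at hy
    linarith
  have hlb : ∀ y ∈ ball x₀ δ, (|u x₀| / 2) ^ 2 ≤ (u y) ^ 2 := by
    intro y hy
    have hdist := hδ (mem_ball.mp hy)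
    rw [Real.dist_eq] at hdist
    have h1 : |u x₀| - |u x₀| / 2 ≤ |u y| := by
      have h2 := abs_sub_abs_le_abs_sub (u x₀) (u y)
      rw [abs_sub_comm] at hdist
      linarith
    calc (|u x₀| / 2) ^ 2 ≤ |u y| ^ 2 := by nlinarith
      _ = (u y) ^ 2 := sq_abs _
  have hvol0 : 0 < (volume (ball x₀ δ)).toReal :=
    ENNReal.toReal_pos (measure_ball_pos volume x₀ hδpos).ne' measure_ball_lt_top.ne
  have hlb2 : (|u x₀| / 2) ^ 2 * (volume (ball x₀ δ)).toReal ≤ ∫ y in ball x₀ δ, (u y) ^ 2 :=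
    setIntegral_ge_of_const_le_real measurableSet_ball measure_ball_lt_top.ne hlb
      huL2.integrableOn
  have hmono2 : ∫ y in ball x₀ δ, (u y) ^ 2
      ≤ ∫ y in ball (0 : EuclideanSpace ℝ (Fin (m + 1))) (‖x₀‖ + δ), (u y) ^ 2 :=
    setIntegral_mono_set huL2.integrableOn
      (Filter.Eventually.of_forall fun y => sq_nonneg _) (HasSubset.Subset.eventuallyLE hsub)
  set L : ℝ := (|u x₀| / 2) ^ 2 * (volume (ball x₀ δ)).toReal with hLdef
  have hLpos : 0 < L := by positivity
  set T : ℝ := 16 * C ^ 2 * I / (-lam) with hTdef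
  have hTnn : 0 ≤ T := div_nonneg (by positivity) (by linarith)
  set r : ℝ := max (‖x₀‖ + δ) (Real.sqrt (T / L) + 1) with hrdef
  have hrR : ‖x₀‖ + δ ≤ r := le_max_left _ _
  have hrpos : 0 < r := lt_of_lt_of_le hRpos hrR
  have hkey := key r hrpos (‖x₀‖ + δ) hRpos hrR
  have hrgt : Real.sqrt (T / L) < r :=
    lt_of_lt_of_le (lt_add_one _) (le_max_right _ _)
  have h2 : T / L < r ^ 2 := (Real.sqrt_lt' hrpos).mp hrgt
  have h3 : T / r ^ 2 < L := by
    rw [div_lt_iff₀ (by positivity)]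
    rw [div_lt_iff₀ hLpos] at h2
    linarith
  linarith [hlb2, hmono2, hkey, h3]
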